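/- Let (k, |·|) be a complete non-Archimedean field of characteristic p > 0 with no nonzero continuous k-linear functionals k^{1/p} → k. Then the valuation ring k° admits no nonzero k°-linear maps F_{k°*}k° → k°. -/

import Mathlib

def unitBallSubring (k : Type*) [NormedField k] [IsUltrametricDist k] : Subring k where
  carrier := {x : k | ‖x‖ ≤ 1}
  zero_mem' := by simp
  one_mem' := by simp
  add_mem' := fun {a b} ha hb => le_trans (IsUltrametricDist.norm_add_le_max a b)
    (max_le ha hb)
  neg_mem' := fun {a} ha => by simpa using ha
  mul_mem' := fun {a b} ha hb => by
    calc ‖a * b‖ = ‖a‖ * ‖b‖ := norm_mul a b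
    _ ≤ 1 := mul_le_one₀ ha (norm_nonneg b) hb

theorem valuationRing_no_pInvLinear {k K : Type*}
    [NontriviallyNormedField k] [CompleteSpace k] [IsUltrametricDist k]
    (p : ℕ) [Fact p.Prime] [CharP k p]
    [NormedField K] [IsUltrametricDist K]
    (ι : k →+* K) (hisom : ∀ x : k, ‖ι x‖ = ‖x‖)
    (hpow : ∀ y : K, ∃ x : k, y ^ p = ι x)
    (hroot : ∀ x : k, ∃ y : K, y ^ p = ι x)
    (hnofunc : ∀ f : K → k, (∀ a b : K, f (a + b) = f a + f b) →
      (∀ (c : k) (y : K), f (ι c * y) = c * f y) → Continuous f → f = 0) :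
    ∀ g : unitBallSubring k →+ unitBallSubring k,
      (∀ r x : unitBallSubring k, g (r ^ p * x) = r * g x) → g = 0 := by
  classical
  intro g hg
  have hp : p.Prime := Fact.out
  have hinj : Function.Injective ι := ι.injective
  haveI : CharP K p := charP_of_injective_ringHom hinj p
  obtain ⟨z, hz⟩ := NormedField.exists_one_lt_norm k
  have hz0 : z ≠ 0 := by
    intro h; rw [h, norm_zero] at hz; linarith
  have hznorm : (0:ℝ) < ‖z‖ := by linarith
  have hzinv : ‖z⁻¹‖ ≤ 1 := by
    rw [norm_inv]; exact inv_le_one_of_one_le₀ hz.le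
  have hιz : ι z ≠ 0 := fun h => hz0 (hinj (by simp [h]))
  -- existence of representations
  have keyn : ∀ (y : K) (n : ℕ), ‖y‖ ≤ ‖z‖ ^ n →
      ∃ x : unitBallSubring k, y ^ p = ι (z ^ (p * n) * (x : k)) := by
    intro y n hn
    obtain ⟨x, hx⟩ := hpow (y * (ι z)⁻¹ ^ n)
    have hxle : ‖x‖ ≤ 1 := by
      have h2 : ‖y * (ι z)⁻¹ ^ n‖ ≤ 1 := by
        rw [norm_mul, norm_pow, norm_inv, hisom, inv_pow, ← div_eq_mul_inv,
          div_le_one (pow_pos hznorm n)]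
        exact hn
      have h1 : ‖x‖ = ‖y * (ι z)⁻¹ ^ n‖ ^ p := by
        rw [← hisom x, ← hx, norm_pow]
      rw [h1]
      exact pow_le_one₀ (norm_nonneg _) h2
    refine ⟨⟨x, hxle⟩, ?_⟩
    have hunit : (ι z)⁻¹ ^ n * (ι z) ^ n = 1 := by
      rw [← mul_pow, inv_mul_cancel₀ hιz, one_pow]
    calc y ^ p = (y * (ι z)⁻¹ ^ n * (ι z) ^ n) ^ p := by
          rw [mul_assoc, hunit, mul_one]
      _ = (y * (ι z)⁻¹ ^ n) ^ p * ((ι z) ^ n) ^ p := mul_pow _ _ p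
      _ = ι x * ι (z ^ n) ^ p := by rw [hx, map_pow]
      _ = ι (z ^ (p * n) * x) := by
          rw [map_mul, map_pow, map_pow, ← pow_mul]
          ring
  have exn : ∀ y : K, ∃ n : ℕ, ‖y‖ ≤ ‖z‖ ^ n :=
    fun y => (pow_unbounded_of_one_lt ‖y‖ hz).imp fun _ h => h.le
  -- well-definedness (agreement)
  have agree1 : ∀ (n d : ℕ) (x x' : unitBallSubring k),
      z ^ (p * n) * (x : k) = z ^ (p * (n + d)) * (x' : k) →
      z ^ n * (g x : k) = z ^ (n + d) * (g x' : k) := by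
    intro n d x x' h
    have hr : ‖(z⁻¹) ^ d‖ ≤ 1 := by
      rw [norm_pow]; exact pow_le_one₀ (norm_nonneg _) hzinv
    have hxx : (x' : k) = (z⁻¹) ^ (p * d) * (x : k) := by
      have h2 : z ^ (p * n) * ((x : k)) = z ^ (p * n) * (z ^ (p * d) * (x' : k)) := by
        rw [h]; ring
      have h3 := mul_left_cancel₀ (pow_ne_zero (p * n) hz0) h2
      rw [h3, inv_pow, ← mul_assoc, inv_mul_cancel₀ (pow_ne_zero _ hz0), one_mul]
    have hx' : x' = (⟨(z⁻¹) ^ d, hr⟩ : unitBallSubring k) ^ p * x := by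
      apply Subtype.ext
      push_cast
      rw [hxx, ← pow_mul, mul_comm d p]
    rw [hx', hg]
    push_cast
    field_simp
    have hzc : z ^ d * z⁻¹ ^ d = 1 := by rw [← mul_pow, mul_inv_cancel₀ hz0, one_pow]
    linear_combination (-(z ^ n * (g x : k))) * hzc
  have agree : ∀ (n m : ℕ) (x x' : unitBallSubring k),
      z ^ (p * n) * (x : k) = z ^ (p * m) * (x' : k) →
      z ^ n * (g x : k) = z ^ m * (g x' : k) := by
    intro n m x x' h
    rcases le_total n m with hnm | hnm
    · obtain ⟨d, rfl⟩ := Nat.exists_eq_add_of_le hnm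
      exact agree1 n d x x' h
    · obtain ⟨d, rfl⟩ := Nat.exists_eq_add_of_le hnm
      exact (agree1 m d x' x h.symm).symm
  -- the functional
  have hfdef : ∃ f : K → k, ∀ (y : K) (n : ℕ) (x : unitBallSubring k),
      y ^ p = ι (z ^ (p * n) * (x : k)) → f y = z ^ n * (g x : k) := by
    refine ⟨fun y => z ^ (exn y).choose *
      (g (keyn y (exn y).choose (exn y).choose_spec).choose : k), ?_⟩
    intro y n x h
    have hX := (keyn y (exn y).choose (exn y).choose_spec).choose_spec
    beta_reduce
    exact agree (exn y).choose n _ x (hinj (hX.symm.trans h))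
  obtain ⟨f, spec⟩ := hfdef
  -- additivity
  have hadd : ∀ a b : K, f (a + b) = f a + f b := by
    intro a b
    obtain ⟨na, hna⟩ := exn a
    obtain ⟨nb, hnb⟩ := exn b
    have hza : (1:ℝ) ≤ ‖z‖ := hz.le
    have ha : ‖a‖ ≤ ‖z‖ ^ max na nb :=
      hna.trans (pow_le_pow_right₀ hza (le_max_left _ _))
    have hb' : ‖b‖ ≤ ‖z‖ ^ max na nb :=
      hnb.trans (pow_le_pow_right₀ hza (le_max_right _ _))
    obtain ⟨xa, hxa⟩ := keyn a (max na nb) ha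
    obtain ⟨xb, hxb⟩ := keyn b (max na nb) hb'
    have hab : (a + b) ^ p = ι (z ^ (p * max na nb) * ((xa + xb : unitBallSubring k) : k)) := by
      rw [add_pow_char, hxa, hxb, ← map_add]
      push_cast
      ring_nf
    rw [spec (a + b) _ (xa + xb) hab, spec a _ xa hxa, spec b _ xb hxb, map_add]
    push_cast
    ring
  -- semilinearity
  have hsmul : ∀ (c : k) (y : K), f (ι c * y) = c * f y := by
    intro c y
    obtain ⟨n, hn⟩ := exn y
    obtain ⟨x, hx⟩ := keyn y n hn
    obtain ⟨m, hm⟩ := exn (ι c)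
    have hcm : ‖c‖ ≤ ‖z‖ ^ m := by rw [← hisom]; exact hm
    have hrle : ‖c * (z⁻¹) ^ m‖ ≤ 1 := by
      rw [norm_mul, norm_pow, norm_inv, inv_pow, ← div_eq_mul_inv,
        div_le_one (pow_pos hznorm m)]
      exact hcm
    set r : unitBallSubring k := ⟨c * (z⁻¹) ^ m, hrle⟩ with hrdef
    have hrep : (ι c * y) ^ p = ι (z ^ (p * (n + m)) * ((r ^ p * x : unitBallSubring k) : k)) := by
      have hco : ((r ^ p * x : unitBallSubring k) : k) = (c * (z⁻¹) ^ m) ^ p * (x : k) := by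
        push_cast [hrdef]
        rfl
      rw [hco, mul_pow, hx, ← map_pow, ← map_mul]
      congr 1
      field_simp
      have hzc : z ^ (p * m) * z⁻¹ ^ (p * m) = 1 := by rw [← mul_pow, mul_inv_cancel₀ hz0, one_pow]
      linear_combination (-(c ^ p * z ^ (p * n) * (x : k))) * hzc
    rw [spec _ _ _ hrep, hg r x, spec y n x hx]
    push_cast [hrdef]
    field_simp
    have hzc : z ^ m * z⁻¹ ^ m = 1 := by rw [← mul_pow, mul_inv_cancel₀ hz0, one_pow]
    linear_combination (z ^ n * c * (g x : k)) * hzc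
  -- boundedness on the unit ball
  have hb : ∀ y : K, ‖y‖ ≤ 1 → ‖f y‖ ≤ 1 := by
    intro y hy
    obtain ⟨x, hx⟩ := keyn y 0 (by simpa using hy)
    rw [spec y 0 x hx, pow_zero, one_mul]
    exact (g x).2
  -- smallness near zero
  have hsmall : ∀ (m : ℕ) (y : K), ‖y‖ * ‖z‖ ^ (p * m) ≤ 1 → ‖f y‖ ≤ (‖z‖ ^ m)⁻¹ := by
    intro m y hy
    have hid : ι ((z⁻¹) ^ (p * m)) * (ι (z ^ (p * m)) * y) = y := by
      rw [← mul_assoc, ← map_mul, inv_pow, inv_mul_cancel₀ (pow_ne_zero _ hz0), map_one, one_mul]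
    have heq : f y = (z⁻¹) ^ (p * m) * f (ι (z ^ (p * m)) * y) := by
      conv_lhs => rw [← hid]
      rw [hsmul]
    have hw : ‖ι (z ^ (p * m)) * y‖ ≤ 1 := by
      rw [norm_mul, hisom, norm_pow, mul_comm]
      exact hy
    rw [heq, norm_mul, norm_pow, norm_inv]
    calc ‖z‖⁻¹ ^ (p * m) * ‖f (ι (z ^ (p * m)) * y)‖
        ≤ ‖z‖⁻¹ ^ (p * m) * 1 := by
          exact mul_le_mul_of_nonneg_left (hb _ hw) (by positivity)
      _ = (‖z‖ ^ (p * m))⁻¹ := by rw [mul_one, inv_pow]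
      _ ≤ (‖z‖ ^ m)⁻¹ := by
          apply inv_anti₀ (pow_pos hznorm m)
          exact pow_le_pow_right₀ hz.le (Nat.le_mul_of_pos_left m hp.pos)
  -- continuity
  have hcont : Continuous f := by
    rw [Metric.continuous_iff]
    intro b ε hε
    obtain ⟨m, hm⟩ := pow_unbounded_of_one_lt ε⁻¹ hz
    refine ⟨(‖z‖ ^ (p * m))⁻¹, by positivity, fun a hab => ?_⟩
    have hsub : f a - f b = f (a - b) := by
      have h1 : f a = f (a - b) + f b := by
        conv_lhs => rw [show a = a - b + b by ring]
        rw [hadd]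
      rw [h1]; ring
    rw [dist_eq_norm] at hab ⊢
    rw [hsub]
    have hle : ‖a - b‖ * ‖z‖ ^ (p * m) ≤ 1 := by
      calc ‖a - b‖ * ‖z‖ ^ (p * m)
          ≤ (‖z‖ ^ (p * m))⁻¹ * ‖z‖ ^ (p * m) :=
            mul_le_mul_of_nonneg_right hab.le (by positivity)
        _ = 1 := inv_mul_cancel₀ (by positivity)
    calc ‖f (a - b)‖ ≤ (‖z‖ ^ m)⁻¹ := hsmall m _ hle
      _ < ε := by
          rw [inv_lt_comm₀ (by positivity) hε]
          exact hm
  -- conclude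
  have hf0 : f = 0 := hnofunc f hadd hsmul hcont
  ext x
  obtain ⟨y, hy⟩ := hroot (x : k)
  have hyrep : y ^ p = ι (z ^ (p * 0) * (x : k)) := by simpa using hy
  have h1 : f y = z ^ 0 * (g x : k) := spec y 0 x hyrep
  rw [hf0, pow_zero, one_mul] at h1
  have : (g x : k) = 0 := by simpa using h1.symm
  simpa [ZeroMemClass.coe_eq_zero] using this
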